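/- Let U be a nonempty finite type, α > 0, and Q, Q' : U → ℝ. Then |α·log(∑_{u} exp(Q u/α)) − α·log(∑_{u} exp(Q' u/α))| ≤ max_{u} |Q u − Q' u|. (Non-expansiveness of the soft maximum, the key estimate in the contraction proofs for the soft Bellman operators.) -/

import Mathlib

lemma softmax_le_aux
    {U : Type*} [Fintype U] [Nonempty U]
    (α : ℝ) (hα : 0 < α) (Q Q' : U → ℝ) (M : ℝ)
    (h : ∀ u, Q u ≤ Q' u + M) :
    α * Real.log (∑ u, Real.exp (Q u / α))
      ≤ α * Real.log (∑ u, Real.exp (Q' u / α)) + M := by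
  have hsum' : (0:ℝ) < ∑ u, Real.exp (Q' u / α) :=
    Finset.sum_pos (fun u _ => Real.exp_pos _) Finset.univ_nonempty
  have hle : (∑ u, Real.exp (Q u / α)) ≤ Real.exp (M / α) * ∑ u, Real.exp (Q' u / α) := by
    rw [Finset.mul_sum]
    apply Finset.sum_le_sum
    intro u _
    rw [← Real.exp_add]
    apply Real.exp_le_exp.mpr
    rw [← add_div]
    gcongr
    linarith [h u]
  have hlog := Real.log_le_log (Finset.sum_pos (fun u _ => Real.exp_pos _) Finset.univ_nonempty) hle
  rw [Real.log_mul (Real.exp_ne_zero _) (ne_of_gt hsum'), Real.log_exp] at hlog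
  have := mul_le_mul_of_nonneg_left hlog (le_of_lt hα)
  rw [mul_add] at this
  calc α * Real.log (∑ u, Real.exp (Q u / α))
      ≤ α * (M / α) + α * Real.log (∑ u, Real.exp (Q' u / α)) := this
    _ = α * Real.log (∑ u, Real.exp (Q' u / α)) + M := by
        field_simp; ring

theorem softmax_nonexpansive
    {U : Type*} [Fintype U] [Nonempty U]
    (α : ℝ) (hα : 0 < α) (Q Q' : U → ℝ) :
    |α * Real.log (∑ u, Real.exp (Q u / α)) - α * Real.log (∑ u, Real.exp (Q' u / α))|
      ≤ Finset.univ.sup' Finset.univ_nonempty (fun u => |Q u - Q' u|) := by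
  set M := Finset.univ.sup' Finset.univ_nonempty (fun u => |Q u - Q' u|) with hM
  have hb : ∀ u, |Q u - Q' u| ≤ M := fun u =>
    Finset.le_sup' (fun u => |Q u - Q' u|) (Finset.mem_univ u)
  rw [abs_sub_le_iff]
  constructor
  · have := softmax_le_aux α hα Q Q' M (fun u => by
      have := abs_le.mp (hb u); linarith [this.2])
    linarith
  · have := softmax_le_aux α hα Q' Q M (fun u => by
      have := abs_le.mp (hb u); linarith [this.1])
    linarith
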